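/- Let τ ∈ ℂ with Re τ > 0 and a ∈ ℂ. Then the integrals g₊(w) = i ∫_{−∞}^{0} e^{−t²τ/4} e^{it(a+w)} dt and g₋(w) = −i ∫_{0}^{∞} e^{−t²τ/4} e^{it(a+w)} dt converge absolutely for every w ∈ ℂ, define entire functions of w, and each is a *_τ-inverse of a + w: (a+w) g₊(w) + (τ/2) g₊'(w) = 1 and (a+w) g₋(w) + (τ/2) g₋'(w) = 1 for all w ∈ ℂ. -/

import Mathlib

open Complex MeasureTheory Filter


section Helpers

lemma re4 (τ : ℂ) (hτ : 0 < τ.re) : 0 < (τ / 4).re := by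
  rw [show (4 : ℂ) = ((4 : ℝ) : ℂ) by norm_num, Complex.div_ofReal_re]
  linarith

lemma reA (τ z : ℂ) (t : ℝ) :
    (-(t : ℂ) ^ 2 * τ / 4 + Complex.I * t * z).re
      = -(τ.re / 4) * t ^ 2 + (Complex.I * z).re * t := by
  have : -(t : ℂ) ^ 2 * τ / 4 + Complex.I * t * z
      = ((-(t ^ 2) / 4 : ℝ) : ℂ) * τ + (Complex.I * z) * (t : ℂ) := by push_cast; ring
  rw [this, Complex.add_re, Complex.re_ofReal_mul, Complex.mul_re]
  simp [Complex.ofReal_re, Complex.ofReal_im]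
  ring

lemma reQ (τ : ℂ) (d t : ℝ) :
    (-(τ / 4) * (t : ℂ) ^ 2 + (d : ℂ) * t + 0).re = -(τ.re / 4) * t ^ 2 + d * t := by
  have : -(τ / 4) * (t : ℂ) ^ 2 + (d : ℂ) * t + 0
      = ((-(t ^ 2) / 4 : ℝ) : ℂ) * τ + ((d * t : ℝ) : ℂ) := by push_cast; ring
  rw [this, Complex.add_re, Complex.re_ofReal_mul, Complex.ofReal_re]
  ring

lemma normH (τ z : ℂ) (t : ℝ) :
    ‖Complex.exp (-(t : ℂ) ^ 2 * τ / 4 + Complex.I * t * z)‖ =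
      Real.exp (-(τ.re / 4) * t ^ 2 + (Complex.I * z).re * t) := by
  rw [Complex.norm_exp, reA]

lemma abs_mul_exp_le' (r c M t : ℝ) (hcM : |c| ≤ M) :
    |t| * Real.exp (r + c * t) ≤ Real.exp (r + (M + 1) * t) + Real.exp (r - (M + 1) * t) := by
  have h1 : |t| ≤ Real.exp |t| := (by linarith [abs_nonneg t] : |t| ≤ |t| + 1).trans
    (Real.add_one_le_exp |t|)
  have hct : c * t ≤ M * |t| := by
    calc c * t ≤ |c * t| := le_abs_self _
    _ = |c| * |t| := abs_mul c t
    _ ≤ M * |t| := mul_le_mul_of_nonneg_right hcM (abs_nonneg t)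
  have key : |t| * Real.exp (r + c * t) ≤ Real.exp (r + (M + 1) * |t|) := by
    calc |t| * Real.exp (r + c * t) ≤ Real.exp |t| * Real.exp (r + c * t) :=
      mul_le_mul_of_nonneg_right h1 (Real.exp_pos _).le
    _ = Real.exp (|t| + (r + c * t)) := (Real.exp_add _ _).symm
    _ ≤ Real.exp (r + (M + 1) * |t|) := Real.exp_le_exp.2 (by nlinarith [abs_nonneg t])
  rcases abs_cases t with ⟨h, _⟩ | ⟨h, _⟩ <;> rw [h] at key ⊢
  · exact key.trans (le_add_of_nonneg_right (Real.exp_pos _).le)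
  · rw [mul_neg, ← sub_eq_add_neg] at key
    exact key.trans (le_add_of_nonneg_left (Real.exp_pos _).le)

lemma intExpQuad (τ : ℂ) (hτ : 0 < τ.re) (d : ℝ) :
    Integrable (fun t : ℝ => Real.exp (-(τ.re / 4) * t ^ 2 + d * t)) := by
  have h := (integrable_cexp_quadratic (re4 τ hτ) (d : ℂ) 0).norm
  have e : (fun t : ℝ => ‖Complex.exp (-(τ / 4) * (t : ℂ) ^ 2 + (d : ℂ) * t + 0)‖)
      = fun t : ℝ => Real.exp (-(τ.re / 4) * t ^ 2 + d * t) := by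
    funext t
    rw [Complex.norm_exp, reQ]
  rwa [e] at h

lemma intBound (τ : ℂ) (hτ : 0 < τ.re) (M : ℝ) :
    Integrable (fun t : ℝ => Real.exp (-(τ.re / 4) * t ^ 2 + (M + 1) * t)
      + Real.exp (-(τ.re / 4) * t ^ 2 - (M + 1) * t)) := by
  have h2 : (fun t : ℝ => Real.exp (-(τ.re / 4) * t ^ 2 + (-(M + 1)) * t))
      = fun t : ℝ => Real.exp (-(τ.re / 4) * t ^ 2 - (M + 1) * t) := by
    funext t; ring_nf
  exact (intExpQuad τ hτ (M + 1)).add (h2 ▸ intExpQuad τ hτ (-(M + 1)))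

lemma intH (τ : ℂ) (hτ : 0 < τ.re) (z : ℂ) :
    Integrable (fun t : ℝ => Complex.exp (-(t : ℂ) ^ 2 * τ / 4 + Complex.I * t * z)) := by
  have h : (fun t : ℝ => Complex.exp (-(t : ℂ) ^ 2 * τ / 4 + Complex.I * t * z))
      = fun t : ℝ => Complex.exp (-(τ / 4) * (t : ℂ) ^ 2 + (Complex.I * z) * t + 0) := by
    funext t; congr 1; ring
  rw [h]
  exact integrable_cexp_quadratic (re4 τ hτ) (Complex.I * z) 0

lemma intTH (τ : ℂ) (hτ : 0 < τ.re) (z : ℂ) :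
    Integrable (fun t : ℝ =>
      (t : ℂ) * Complex.exp (-(t : ℂ) ^ 2 * τ / 4 + Complex.I * t * z)) := by
  set c : ℝ := (Complex.I * z).re with hc
  refine (intBound τ hτ |c|).mono' ?_ ?_
  · apply Continuous.aestronglyMeasurable
    fun_prop
  · refine Filter.Eventually.of_forall fun t => ?_
    rw [norm_mul, Complex.norm_real, Real.norm_eq_abs, normH]
    exact abs_mul_exp_le' _ _ _ t le_rfl

lemma quadTendstoTop (k c : ℝ) (hk : 0 < k) :
    Tendsto (fun t : ℝ => -k * t ^ 2 + c * t) atTop atBot := by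
  have hfun : (fun t : ℝ => -k * t ^ 2 + c * t) = fun t : ℝ => t * (c - k * t) := by
    funext t; ring
  rw [hfun]
  refine Tendsto.atTop_mul_atBot₀ tendsto_id ?_
  have h1 : Tendsto (fun t : ℝ => k * t) atTop atTop := tendsto_id.const_mul_atTop hk
  have := tendsto_atBot_add_const_left atTop c (tendsto_neg_atTop_atBot.comp h1)
  simpa [sub_eq_add_neg, Function.comp] using this

lemma quadTendstoBot (k c : ℝ) (hk : 0 < k) :
    Tendsto (fun t : ℝ => -k * t ^ 2 + c * t) atBot atBot := by
  have hfun : (fun t : ℝ => -k * t ^ 2 + c * t) = fun t : ℝ => t * (c - k * t) := by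
    funext t; ring
  rw [hfun]
  refine Tendsto.atBot_mul_atTop₀ tendsto_id ?_
  have h1 : Tendsto (fun t : ℝ => k * t) atBot atBot := tendsto_id.const_mul_atBot hk
  have := tendsto_atTop_add_const_left atBot c (tendsto_neg_atBot_atTop.comp h1)
  simpa [sub_eq_add_neg, Function.comp] using this

lemma tendsHTop (τ : ℂ) (hτ : 0 < τ.re) (z : ℂ) :
    Tendsto (fun t : ℝ => Complex.exp (-(t : ℂ) ^ 2 * τ / 4 + Complex.I * t * z))
      atTop (nhds 0) := by
  rw [tendsto_zero_iff_norm_tendsto_zero]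
  have e : (fun t : ℝ => ‖Complex.exp (-(t : ℂ) ^ 2 * τ / 4 + Complex.I * t * z)‖)
      = fun t : ℝ => Real.exp (-(τ.re / 4) * t ^ 2 + (Complex.I * z).re * t) :=
    funext (normH τ z)
  rw [e]
  exact Real.tendsto_exp_atBot.comp (quadTendstoTop (τ.re / 4) _ (by linarith))

lemma tendsHBot (τ : ℂ) (hτ : 0 < τ.re) (z : ℂ) :
    Tendsto (fun t : ℝ => Complex.exp (-(t : ℂ) ^ 2 * τ / 4 + Complex.I * t * z))
      atBot (nhds 0) := by
  rw [tendsto_zero_iff_norm_tendsto_zero]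
  have e : (fun t : ℝ => ‖Complex.exp (-(t : ℂ) ^ 2 * τ / 4 + Complex.I * t * z)‖)
      = fun t : ℝ => Real.exp (-(τ.re / 4) * t ^ 2 + (Complex.I * z).re * t) :=
    funext (normH τ z)
  rw [e]
  exact Real.tendsto_exp_atBot.comp (quadTendstoBot (τ.re / 4) _ (by linarith))

lemma derivT (τ z : ℂ) (t : ℝ) :
    HasDerivAt (fun s : ℝ => Complex.exp (-(s : ℂ) ^ 2 * τ / 4 + Complex.I * s * z))
      ((-(t : ℂ) * τ / 2 + Complex.I * z)
        * Complex.exp (-(t : ℂ) ^ 2 * τ / 4 + Complex.I * t * z)) t := by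
  have hr : HasDerivAt (fun s : ℝ => (s : ℂ)) 1 t := by
    simpa using (hasDerivAt_id t).ofReal_comp
  have hP : HasDerivAt (fun s : ℝ => -(s : ℂ) ^ 2 * τ / 4 + Complex.I * s * z)
      (-(t : ℂ) * τ / 2 + Complex.I * z) t := by
    have h1 : HasDerivAt (fun s : ℝ => (s : ℂ) ^ 2) (2 * (t : ℂ)) t := by
      have h := hr.mul hr
      have ef : (fun s : ℝ => (s : ℂ) * (s : ℂ)) = fun s : ℝ => (s : ℂ) ^ 2 := by
        funext s; rw [pow_two]
      have ev : (1 : ℂ) * (t : ℂ) + (t : ℂ) * 1 = 2 * (t : ℂ) := by ring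
      rw [← ef, ← ev]
      exact h
    have h2 := (h1.const_mul (-τ / 4)).add (hr.const_mul (Complex.I * z))
    have e1 : (fun s : ℝ => -τ / 4 * (s : ℂ) ^ 2 + Complex.I * z * (s : ℂ))
        = fun s : ℝ => -(s : ℂ) ^ 2 * τ / 4 + Complex.I * s * z := by
      funext s; ring
    have e2 : -τ / 4 * (2 * (t : ℂ)) + Complex.I * z * 1
        = -(t : ℂ) * τ / 2 + Complex.I * z := by ring
    rw [← e1, ← e2]
    exact h2
  have := hP.cexp
  convert this using 1
  ring

lemma derivW (τ a : ℂ) (t : ℝ) (x : ℂ) :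
    HasDerivAt (fun w : ℂ =>
        Complex.exp (-(t : ℂ) ^ 2 * τ / 4) * Complex.exp (Complex.I * t * (a + w)))
      ((Complex.I * t) *
        (Complex.exp (-(t : ℂ) ^ 2 * τ / 4) * Complex.exp (Complex.I * t * (a + x)))) x := by
  have h0 : HasDerivAt (fun w : ℂ => Complex.I * (t : ℂ) * (a + w)) (Complex.I * t) x := by
    have := ((hasDerivAt_id x).const_add a).const_mul (Complex.I * (t : ℂ))
    simpa using this
  have := (h0.cexp).const_mul (Complex.exp (-(t : ℂ) ^ 2 * τ / 4))
  exact this.congr_deriv (by ring)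

lemma prodEq (τ z : ℂ) :
    (fun t : ℝ => Complex.exp (-(t : ℂ) ^ 2 * τ / 4) * Complex.exp (Complex.I * t * z))
      = fun t : ℝ => Complex.exp (-(t : ℂ) ^ 2 * τ / 4 + Complex.I * t * z) :=
  funext fun t => (Complex.exp_add _ _).symm

lemma partsIio (τ : ℂ) (hτ : 0 < τ.re) (z : ℂ) :
    -(τ / 2) * (∫ t in Set.Iio (0 : ℝ),
        (t : ℂ) * Complex.exp (-(t : ℂ) ^ 2 * τ / 4 + Complex.I * t * z))
      + Complex.I * z * (∫ t in Set.Iio (0 : ℝ),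
        Complex.exp (-(t : ℂ) ^ 2 * τ / 4 + Complex.I * t * z)) = 1 := by
  have h1 := ((intTH τ hτ z).const_mul (-(τ / 2))).integrableOn (s := Set.Iic (0 : ℝ))
  have h2 := ((intH τ hτ z).const_mul (Complex.I * z)).integrableOn (s := Set.Iic (0 : ℝ))
  have hsum : IntegrableOn (fun t : ℝ => (-(t : ℂ) * τ / 2 + Complex.I * z)
      * Complex.exp (-(t : ℂ) ^ 2 * τ / 4 + Complex.I * t * z)) (Set.Iic (0 : ℝ)) := by
    have e : (fun t : ℝ => -(τ / 2) * ((t : ℂ)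
          * Complex.exp (-(t : ℂ) ^ 2 * τ / 4 + Complex.I * t * z))
        + Complex.I * z * Complex.exp (-(t : ℂ) ^ 2 * τ / 4 + Complex.I * t * z))
        = fun t : ℝ => (-(t : ℂ) * τ / 2 + Complex.I * z)
          * Complex.exp (-(t : ℂ) ^ 2 * τ / 4 + Complex.I * t * z) := by
      funext t; ring
    exact e ▸ h1.add h2
  have hFTC := integral_Iic_of_hasDerivAt_of_tendsto' (a := (0 : ℝ)) (m := 0)
    (fun x _ => derivT τ z x) hsum (tendsHBot τ hτ z)
  have hval : Complex.exp (-(0 : ℝ) ^ 2 * τ / 4 + Complex.I * (0 : ℝ) * z) = 1 := by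
    norm_num
  rw [hval, sub_zero] at hFTC
  calc -(τ / 2) * (∫ t in Set.Iio (0 : ℝ),
          (t : ℂ) * Complex.exp (-(t : ℂ) ^ 2 * τ / 4 + Complex.I * t * z))
        + Complex.I * z * (∫ t in Set.Iio (0 : ℝ),
          Complex.exp (-(t : ℂ) ^ 2 * τ / 4 + Complex.I * t * z))
      = -(τ / 2) * (∫ t in Set.Iic (0 : ℝ),
          (t : ℂ) * Complex.exp (-(t : ℂ) ^ 2 * τ / 4 + Complex.I * t * z))
        + Complex.I * z * (∫ t in Set.Iic (0 : ℝ),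
          Complex.exp (-(t : ℂ) ^ 2 * τ / 4 + Complex.I * t * z)) := by
        rw [setIntegral_congr_set Iio_ae_eq_Iic, setIntegral_congr_set Iio_ae_eq_Iic]
    _ = ∫ t in Set.Iic (0 : ℝ), (-(τ / 2) * ((t : ℂ)
          * Complex.exp (-(t : ℂ) ^ 2 * τ / 4 + Complex.I * t * z))
        + Complex.I * z * Complex.exp (-(t : ℂ) ^ 2 * τ / 4 + Complex.I * t * z)) := by
        rw [integral_add h1 h2, integral_const_mul, integral_const_mul]
    _ = ∫ t in Set.Iic (0 : ℝ), (-(t : ℂ) * τ / 2 + Complex.I * z)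
          * Complex.exp (-(t : ℂ) ^ 2 * τ / 4 + Complex.I * t * z) := by
        congr 1; funext t; ring
    _ = 1 := hFTC

lemma partsIoi (τ : ℂ) (hτ : 0 < τ.re) (z : ℂ) :
    -(τ / 2) * (∫ t in Set.Ioi (0 : ℝ),
        (t : ℂ) * Complex.exp (-(t : ℂ) ^ 2 * τ / 4 + Complex.I * t * z))
      + Complex.I * z * (∫ t in Set.Ioi (0 : ℝ),
        Complex.exp (-(t : ℂ) ^ 2 * τ / 4 + Complex.I * t * z)) = -1 := by
  have h1 := ((intTH τ hτ z).const_mul (-(τ / 2))).integrableOn (s := Set.Ioi (0 : ℝ))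
  have h2 := ((intH τ hτ z).const_mul (Complex.I * z)).integrableOn (s := Set.Ioi (0 : ℝ))
  have hsum : IntegrableOn (fun t : ℝ => (-(t : ℂ) * τ / 2 + Complex.I * z)
      * Complex.exp (-(t : ℂ) ^ 2 * τ / 4 + Complex.I * t * z)) (Set.Ioi (0 : ℝ)) := by
    have e : (fun t : ℝ => -(τ / 2) * ((t : ℂ)
          * Complex.exp (-(t : ℂ) ^ 2 * τ / 4 + Complex.I * t * z))
        + Complex.I * z * Complex.exp (-(t : ℂ) ^ 2 * τ / 4 + Complex.I * t * z))
        = fun t : ℝ => (-(t : ℂ) * τ / 2 + Complex.I * z)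
          * Complex.exp (-(t : ℂ) ^ 2 * τ / 4 + Complex.I * t * z) := by
      funext t; ring
    exact e ▸ h1.add h2
  have hFTC := integral_Ioi_of_hasDerivAt_of_tendsto' (a := (0 : ℝ)) (m := 0)
    (fun x _ => derivT τ z x) hsum (tendsHTop τ hτ z)
  have hval : Complex.exp (-(0 : ℝ) ^ 2 * τ / 4 + Complex.I * (0 : ℝ) * z) = 1 := by
    norm_num
  rw [hval, zero_sub] at hFTC
  calc -(τ / 2) * (∫ t in Set.Ioi (0 : ℝ),
          (t : ℂ) * Complex.exp (-(t : ℂ) ^ 2 * τ / 4 + Complex.I * t * z))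
        + Complex.I * z * (∫ t in Set.Ioi (0 : ℝ),
          Complex.exp (-(t : ℂ) ^ 2 * τ / 4 + Complex.I * t * z))
      = ∫ t in Set.Ioi (0 : ℝ), (-(τ / 2) * ((t : ℂ)
          * Complex.exp (-(t : ℂ) ^ 2 * τ / 4 + Complex.I * t * z))
        + Complex.I * z * Complex.exp (-(t : ℂ) ^ 2 * τ / 4 + Complex.I * t * z)) := by
        rw [integral_add h1 h2, integral_const_mul, integral_const_mul]
    _ = ∫ t in Set.Ioi (0 : ℝ), (-(t : ℂ) * τ / 2 + Complex.I * z)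
          * Complex.exp (-(t : ℂ) ^ 2 * τ / 4 + Complex.I * t * z) := by
        congr 1; funext t; ring
    _ = -1 := hFTC

end Helpers


/-- `g₊(w) = i ∫_{−∞}^{0} e^{−t²τ/4} e^{it(a+w)} dt`, the `τ`-expression of
`(a+w)_{*+}^{−1}`. -/
noncomputable def invPlus (τ a : ℂ) : ℂ → ℂ := fun w =>
  Complex.I * ∫ t in Set.Iio (0 : ℝ),
    Complex.exp (-(t : ℂ) ^ 2 * τ / 4) * Complex.exp (Complex.I * (t : ℂ) * (a + w))

/-- `g₋(w) = −i ∫_{0}^{∞} e^{−t²τ/4} e^{it(a+w)} dt`, the `τ`-expression of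
`(a+w)_{*−}^{−1}`. -/
noncomputable def invMinus (τ a : ℂ) : ℂ → ℂ := fun w =>
  -Complex.I * ∫ t in Set.Ioi (0 : ℝ),
    Complex.exp (-(t : ℂ) ^ 2 * τ / 4) * Complex.exp (Complex.I * (t : ℂ) * (a + w))

section Main

lemma hasDerivAt_integral_aux (τ : ℂ) (hτ : 0 < τ.re) (a : ℂ) (s : Set ℝ)
    (hs : MeasurableSet s) (w : ℂ) :
    HasDerivAt (fun x : ℂ => ∫ t in s,
        Complex.exp (-(t : ℂ) ^ 2 * τ / 4) * Complex.exp (Complex.I * (t : ℂ) * (a + x)))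
      (Complex.I * ∫ t in s,
        (t : ℂ) * Complex.exp (-(t : ℂ) ^ 2 * τ / 4 + Complex.I * t * (a + w))) w := by
  set M : ℝ := ‖a + w‖ + 1 with hM
  have key := hasDerivAt_integral_of_dominated_loc_of_deriv_le
    (μ := volume.restrict s) (x₀ := w)
    (F := fun x (t : ℝ) =>
      Complex.exp (-(t : ℂ) ^ 2 * τ / 4) * Complex.exp (Complex.I * (t : ℂ) * (a + x)))
    (F' := fun x (t : ℝ) => (Complex.I * t) *
      (Complex.exp (-(t : ℂ) ^ 2 * τ / 4) * Complex.exp (Complex.I * (t : ℂ) * (a + x))))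
    (bound := fun t : ℝ => Real.exp (-(τ.re / 4) * t ^ 2 + (M + 1) * t)
      + Real.exp (-(τ.re / 4) * t ^ 2 - (M + 1) * t))
    (s := Metric.ball w 1) (Metric.ball_mem_nhds w one_pos)
    (Filter.Eventually.of_forall fun x =>
      (Continuous.aestronglyMeasurable (by fun_prop)).restrict)
    (by
      show Integrable (fun t : ℝ =>
        Complex.exp (-(t : ℂ) ^ 2 * τ / 4) * Complex.exp (Complex.I * (t : ℂ) * (a + w))) _
      rw [prodEq]
      exact (intH τ hτ (a + w)).integrableOn)
    (Continuous.aestronglyMeasurable (by fun_prop)).restrict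
    ?_ ((intBound τ hτ M).restrict)
    (Filter.Eventually.of_forall fun t => fun x _ => derivW τ a t x)
  · have e : (fun t : ℝ => (Complex.I * (t : ℂ)) *
        (Complex.exp (-(t : ℂ) ^ 2 * τ / 4) * Complex.exp (Complex.I * (t : ℂ) * (a + w))))
        = fun t : ℝ => Complex.I *
          ((t : ℂ) * Complex.exp (-(t : ℂ) ^ 2 * τ / 4 + Complex.I * t * (a + w))) := by
      funext t; rw [← Complex.exp_add]; ring
    have h2 := key.2
    rw [e, integral_const_mul] at h2
    exact h2
  · refine Filter.Eventually.of_forall fun t => fun x hx => ?_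
    have hnorm : ‖(Complex.I * (t : ℂ)) *
        (Complex.exp (-(t : ℂ) ^ 2 * τ / 4) * Complex.exp (Complex.I * (t : ℂ) * (a + x)))‖
        = |t| * Real.exp (-(τ.re / 4) * t ^ 2 + (Complex.I * (a + x)).re * t) := by
      rw [← Complex.exp_add, norm_mul, normH, norm_mul, Complex.norm_I, one_mul,
        Complex.norm_real, Real.norm_eq_abs]
    rw [hnorm]
    refine abs_mul_exp_le' _ _ _ t ?_
    have h1 : |(Complex.I * (a + x)).re| ≤ ‖Complex.I * (a + x)‖ := Complex.abs_re_le_norm _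
    have h2 : ‖Complex.I * (a + x)‖ = ‖a + x‖ := by
      rw [norm_mul, Complex.norm_I, one_mul]
    have h3 : ‖a + x‖ ≤ ‖a + w‖ + 1 := by
      have : a + x = (a + w) + (x - w) := by ring
      rw [this]
      refine (norm_add_le _ _).trans ?_
      have := mem_ball_iff_norm.mp hx
      linarith
    rw [h2] at h1
    exact h1.trans h3

lemma hasDeriv_invPlus (τ : ℂ) (hτ : 0 < τ.re) (a : ℂ) (w : ℂ) :
    HasDerivAt (invPlus τ a)
      (-(∫ t in Set.Iio (0 : ℝ),
        (t : ℂ) * Complex.exp (-(t : ℂ) ^ 2 * τ / 4 + Complex.I * t * (a + w)))) w := by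
  have h := (hasDerivAt_integral_aux τ hτ a (Set.Iio 0) measurableSet_Iio w).const_mul Complex.I
  have e : Complex.I * (Complex.I * ∫ t in Set.Iio (0 : ℝ),
      (t : ℂ) * Complex.exp (-(t : ℂ) ^ 2 * τ / 4 + Complex.I * t * (a + w)))
      = -(∫ t in Set.Iio (0 : ℝ),
        (t : ℂ) * Complex.exp (-(t : ℂ) ^ 2 * τ / 4 + Complex.I * t * (a + w))) := by
    rw [← mul_assoc, Complex.I_mul_I]; ring
  rw [e] at h
  exact h

lemma hasDeriv_invMinus (τ : ℂ) (hτ : 0 < τ.re) (a : ℂ) (w : ℂ) :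
    HasDerivAt (invMinus τ a)
      (∫ t in Set.Ioi (0 : ℝ),
        (t : ℂ) * Complex.exp (-(t : ℂ) ^ 2 * τ / 4 + Complex.I * t * (a + w))) w := by
  have h := (hasDerivAt_integral_aux τ hτ a (Set.Ioi 0) measurableSet_Ioi w).const_mul
    (-Complex.I)
  have e : -Complex.I * (Complex.I * ∫ t in Set.Ioi (0 : ℝ),
      (t : ℂ) * Complex.exp (-(t : ℂ) ^ 2 * τ / 4 + Complex.I * t * (a + w)))
      = ∫ t in Set.Ioi (0 : ℝ),
        (t : ℂ) * Complex.exp (-(t : ℂ) ^ 2 * τ / 4 + Complex.I * t * (a + w)) := by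
    rw [← mul_assoc]
    simp [Complex.I_mul_I]
  rw [e] at h
  exact h

end Main

/-- For `Re τ > 0` and `a ∈ ℂ`, the integrals defining `g₊`, `g₋` converge
absolutely, define entire functions of `w`, and each is a `*_τ`-inverse of `a + w`:
`(a+w)·g(w) + (τ/2)·g′(w) = 1`. -/

theorem invPlus_invMinus_inverses (τ : ℂ) (hτ : 0 < τ.re) (a : ℂ) :
    (∀ w : ℂ, IntegrableOn (fun t : ℝ =>
      Complex.exp (-(t : ℂ) ^ 2 * τ / 4) * Complex.exp (Complex.I * (t : ℂ) * (a + w)))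
      (Set.Iio (0 : ℝ))) ∧
    (∀ w : ℂ, IntegrableOn (fun t : ℝ =>
      Complex.exp (-(t : ℂ) ^ 2 * τ / 4) * Complex.exp (Complex.I * (t : ℂ) * (a + w)))
      (Set.Ioi (0 : ℝ))) ∧
    Differentiable ℂ (invPlus τ a) ∧
    Differentiable ℂ (invMinus τ a) ∧
    (∀ w : ℂ, (a + w) * invPlus τ a w + τ / 2 * deriv (invPlus τ a) w = 1) ∧
    (∀ w : ℂ, (a + w) * invMinus τ a w + τ / 2 * deriv (invMinus τ a) w = 1) := by
  refine ⟨fun w => ?_, fun w => ?_, fun w => (hasDeriv_invPlus τ hτ a w).differentiableAt,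
    fun w => (hasDeriv_invMinus τ hτ a w).differentiableAt, fun w => ?_, fun w => ?_⟩
  · rw [prodEq]; exact (intH τ hτ (a + w)).integrableOn
  · rw [prodEq]; exact (intH τ hτ (a + w)).integrableOn
  · have hd := (hasDeriv_invPlus τ hτ a w).deriv
    have hv : invPlus τ a w = Complex.I * ∫ t in Set.Iio (0 : ℝ),
        Complex.exp (-(t : ℂ) ^ 2 * τ / 4 + Complex.I * t * (a + w)) := by
      unfold invPlus
      rw [prodEq]
    rw [hd, hv]
    linear_combination partsIio τ hτ (a + w)
  · have hd := (hasDeriv_invMinus τ hτ a w).deriv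
    have hv : invMinus τ a w = -Complex.I * ∫ t in Set.Ioi (0 : ℝ),
        Complex.exp (-(t : ℂ) ^ 2 * τ / 4 + Complex.I * t * (a + w)) := by
      unfold invMinus
      rw [prodEq]
    rw [hd, hv]
    linear_combination -partsIoi τ hτ (a + w)
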